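/- Let A, B be bounded linear operators on a complex Hilbert space H, K a nonempty set of unit vectors, ber(T) = sup_{k∈K}|⟨T k,k⟩|, ‖T‖_ber = sup_{k,l∈K}|⟨T k,l⟩|. Then ‖A*B + B*A‖_ber ≤ ber(A*A + B*B). -/

import Mathlib

open ContinuousLinearMap

noncomputable def berNum {H : Type*} [NormedAddCommGroup H] [InnerProductSpace ℂ H]
    (K : Set H) (T : H →L[ℂ] H) : ℝ :=
  sSup {x : ℝ | ∃ k ∈ K, x = ‖(inner ℂ (T k) k : ℂ)‖}

noncomputable def berNorm {H : Type*} [NormedAddCommGroup H] [InnerProductSpace ℂ H]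
    (K : Set H) (T : H →L[ℂ] H) : ℝ :=
  sSup {x : ℝ | ∃ k ∈ K, ∃ l ∈ K, x = ‖(inner ℂ (T k) l : ℂ)‖}

theorem berNorm_adjointA_B_add {H : Type*} [NormedAddCommGroup H] [InnerProductSpace ℂ H] [CompleteSpace H]
    (A B : H →L[ℂ] H) (K : Set H) (hK : K.Nonempty) (hK1 : ∀ k ∈ K, ‖k‖ = 1) :
    berNorm K (adjoint A * B + adjoint B * A) ≤ berNum K (adjoint A * A + adjoint B * B) := by
  set T := adjoint A * A + adjoint B * B with hT
  have hTval : ∀ k ∈ K, (inner ℂ (T k) k : ℂ) = ((‖A k‖ ^ 2 + ‖B k‖ ^ 2 : ℝ) : ℂ) := by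
    intro k hk
    simp [hT, add_apply, mul_apply, inner_add_left, adjoint_inner_left,
      inner_self_eq_norm_sq_to_K]
  -- berNum set bounded above
  have hbdd : BddAbove {x : ℝ | ∃ k ∈ K, x = ‖(inner ℂ (T k) k : ℂ)‖} := by
    refine ⟨‖T‖, ?_⟩
    rintro x ⟨k, hk, rfl⟩
    calc ‖(inner ℂ (T k) k : ℂ)‖ ≤ ‖T k‖ * ‖k‖ := norm_inner_le_norm _ _
      _ ≤ ‖T‖ * ‖k‖ * ‖k‖ := by
          have := T.le_opNorm k
          nlinarith [norm_nonneg k, norm_nonneg (T k)]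
      _ = ‖T‖ := by rw [hK1 k hk]; ring
  have hle : ∀ k ∈ K, ‖A k‖ ^ 2 + ‖B k‖ ^ 2 ≤ berNum K T := by
    intro k hk
    have hmem : ‖A k‖ ^ 2 + ‖B k‖ ^ 2 ∈ {x : ℝ | ∃ k ∈ K, x = ‖(inner ℂ (T k) k : ℂ)‖} := by
      refine ⟨k, hk, ?_⟩
      rw [hTval k hk, Complex.norm_real]
      exact (Real.norm_of_nonneg (by positivity)).symm
    exact le_csSup hbdd hmem
  -- main bound
  apply csSup_le
  · obtain ⟨k, hk⟩ := hK
    exact ⟨_, k, hk, k, hk, rfl⟩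
  · rintro x ⟨k, hk, l, hl, rfl⟩
    have hval : (inner ℂ ((adjoint A * B + adjoint B * A) k) l : ℂ)
        = inner ℂ (B k) (A l) + inner ℂ (A k) (B l) := by
      simp [add_apply, mul_apply, inner_add_left, adjoint_inner_left]
    calc ‖(inner ℂ ((adjoint A * B + adjoint B * A) k) l : ℂ)‖
        ≤ ‖(inner ℂ (B k) (A l) : ℂ)‖ + ‖(inner ℂ (A k) (B l) : ℂ)‖ := by
          rw [hval]; exact norm_add_le _ _
      _ ≤ ‖B k‖ * ‖A l‖ + ‖A k‖ * ‖B l‖ :=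
          add_le_add (norm_inner_le_norm _ _) (norm_inner_le_norm _ _)
      _ ≤ ((‖A k‖ ^ 2 + ‖B k‖ ^ 2) + (‖A l‖ ^ 2 + ‖B l‖ ^ 2)) / 2 := by
          nlinarith [sq_nonneg (‖B k‖ - ‖A l‖), sq_nonneg (‖A k‖ - ‖B l‖)]
      _ ≤ (berNum K T + berNum K T) / 2 := by
          have := hle k hk; have := hle l hl; linarith
      _ = berNum K T := by ring
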